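/- If y₅ solves y₅' = (k₈ + k₉H₁(y₄))H₂(y₅)H₃(y₇)y₃ − k₃(y₅ − q₅) where each Hᵢ takes values in [0,1], y₃(t) ∈ [0, M₃] for all t, k₃ > 0, k₈, k₉ ≥ 0, q₅ > 0, and 0 ≤ y₅(0) ≤ q₅ + (k₈+k₉)M₃/k₃, then y₅(t) ∈ [q₅·(1 − e^{−k₃t})·0 + min(y₅(0), q₅), q₅ + (k₈+k₉)M₃/k₃] for all t ≥ 0; in particular y₅ remains bounded by q₅ + (k₈+k₉)M₃/k₃. -/

import Mathlib

theorem il6_boundedness (k₃ k₈ k₉ q₅ M₃ : ℝ) (hk₃ : 0 < k₃) (hk₈ : 0 ≤ k₈) (hk₉ : 0 ≤ k₉)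
    (hq : 0 < q₅) (hM : 0 ≤ M₃)
    (H₁ H₂ H₃ : ℝ → ℝ) (hH₁ : ∀ s, H₁ s ∈ Set.Icc (0:ℝ) 1)
    (hH₂ : ∀ s, H₂ s ∈ Set.Icc (0:ℝ) 1) (hH₃ : ∀ s, H₃ s ∈ Set.Icc (0:ℝ) 1)
    (y₃ y₄ y₅ y₇ : ℝ → ℝ) (hy₃c : Continuous y₃) (hy₄c : Continuous y₄) (hy₇c : Continuous y₇)
    (hy₃ : ∀ t, 0 ≤ t → y₃ t ∈ Set.Icc 0 M₃)
    (hode : ∀ t, 0 ≤ t → HasDerivAt y₅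
      ((k₈ + k₉ * H₁ (y₄ t)) * H₂ (y₅ t) * H₃ (y₇ t) * y₃ t - k₃ * (y₅ t - q₅)) t)
    (h0 : 0 ≤ y₅ 0 ∧ y₅ 0 ≤ q₅ + (k₈ + k₉) * M₃ / k₃) :
    ∀ t, 0 ≤ t → y₅ t ∈ Set.Icc (min (y₅ 0) q₅) (q₅ + (k₈ + k₉) * M₃ / k₃) := by
  intro t ht
  set P : ℝ → ℝ := fun s => (k₈ + k₉ * H₁ (y₄ s)) * H₂ (y₅ s) * H₃ (y₇ s) * y₃ s with hP
  have hPnn : ∀ s, 0 ≤ s → 0 ≤ P s := by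
    intro s hs
    exact mul_nonneg (mul_nonneg (mul_nonneg
      (add_nonneg hk₈ (mul_nonneg hk₉ (hH₁ (y₄ s)).1)) (hH₂ (y₅ s)).1)
      (hH₃ (y₇ s)).1) (hy₃ s hs).1
  have hPle : ∀ s, 0 ≤ s → P s ≤ (k₈ + k₉) * M₃ := by
    intro s hs
    have ha : 0 ≤ k₈ + k₉ * H₁ (y₄ s) :=
      add_nonneg hk₈ (mul_nonneg hk₉ (hH₁ (y₄ s)).1)
    have haA : k₈ + k₉ * H₁ (y₄ s) ≤ k₈ + k₉ := by
      nlinarith [(hH₁ (y₄ s)).2, (hH₁ (y₄ s)).1]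
    have h1 : (k₈ + k₉ * H₁ (y₄ s)) * H₂ (y₅ s) ≤ k₈ + k₉ := by
      nlinarith [(hH₂ (y₅ s)).1, (hH₂ (y₅ s)).2]
    have h1' : 0 ≤ (k₈ + k₉ * H₁ (y₄ s)) * H₂ (y₅ s) := mul_nonneg ha (hH₂ (y₅ s)).1
    have h2 : (k₈ + k₉ * H₁ (y₄ s)) * H₂ (y₅ s) * H₃ (y₇ s) ≤ k₈ + k₉ := by
      nlinarith [(hH₃ (y₇ s)).1, (hH₃ (y₇ s)).2]
    have h2' : 0 ≤ (k₈ + k₉ * H₁ (y₄ s)) * H₂ (y₅ s) * H₃ (y₇ s) :=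
      mul_nonneg h1' (hH₃ (y₇ s)).1
    exact mul_le_mul h2 (hy₃ s hs).2 (hy₃ s hs).1 (add_nonneg hk₈ hk₉)
  have hkM : (k₈ + k₉) * M₃ / k₃ * k₃ = (k₈ + k₉) * M₃ := div_mul_cancel₀ _ hk₃.ne'
  have hcont : ContinuousOn y₅ (Set.Icc 0 t) := fun s hs =>
    ((hode s hs.1).continuousAt).continuousWithinAt
  constructor
  · -- lower bound
    refine le_of_forall_pos_le_add fun ε hε => ?_
    have key : ∀ ⦃x⦄, x ∈ Set.Icc 0 t → (fun s => -y₅ s) x ≤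
        (fun _ : ℝ => -(min (y₅ 0) q₅ - ε)) x := by
      refine image_le_of_deriv_right_lt_deriv_boundary'
        (f' := fun s => -(P s - k₃ * (y₅ s - q₅))) (hcont.neg)
        (fun x hx => ((hode x hx.1).neg).hasDerivWithinAt) ?_ continuousOn_const
        (fun x _ => (hasDerivWithinAt_const _ _ _)) ?_
      · have : min (y₅ 0) q₅ ≤ y₅ 0 := min_le_left _ _
        show -y₅ 0 ≤ -(min (y₅ 0) q₅ - ε)
        linarith
      · intro x hx heq
        have heq : -y₅ x = -(min (y₅ 0) q₅ - ε) := heq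
        have hy5x : y₅ x = min (y₅ 0) q₅ - ε := by linarith
        have h1 : 0 ≤ P x := hPnn x hx.1
        have h2 : min (y₅ 0) q₅ ≤ q₅ := min_le_right _ _
        have : -(P x - k₃ * (y₅ x - q₅)) < 0 := by
          rw [hy5x]; nlinarith
        simpa using this
    have := key (Set.right_mem_Icc.2 ht)
    simp only at this
    linarith
  · -- upper bound
    refine le_of_forall_pos_le_add fun ε hε => ?_
    have key : ∀ ⦃x⦄, x ∈ Set.Icc 0 t → y₅ x ≤
        (fun _ : ℝ => q₅ + (k₈ + k₉) * M₃ / k₃ + ε) x := by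
      refine image_le_of_deriv_right_lt_deriv_boundary'
        (f' := fun s => P s - k₃ * (y₅ s - q₅)) hcont
        (fun x hx => (hode x hx.1).hasDerivWithinAt) ?_ continuousOn_const
        (fun x _ => (hasDerivWithinAt_const _ _ _)) ?_
      · linarith [h0.2]
      · intro x hx heq
        have heq : y₅ x = q₅ + (k₈ + k₉) * M₃ / k₃ + ε := heq
        have h1 : P x ≤ (k₈ + k₉) * M₃ := hPle x hx.1
        have : P x - k₃ * (y₅ x - q₅) < 0 := by
          rw [heq]; nlinarith
        simpa using this
    have := key (Set.right_mem_Icc.2 ht)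
    simp only at this
    linarith
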